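/- Assume Banaszczyk's transference bound λ(Λ)·μ(Λ*) ≤ n/2 for every full-rank lattice Λ ⊂ R^n with dual Λ*. Then for any symmetric positive definite A ∈ R^{n×n} and a ∈ R^n: if the ellipsoid E(A,a) contains no point of Z^n, then its lattice width w(E(A,a)) is at most n. -/

import Mathlib

open Matrix

/-- The width of a set `K` along a direction `d`. -/
noncomputable def width {n : ℕ} (K : Set (Fin n → ℝ)) (d : Fin n → ℝ) : ℝ :=
  sSup ((fun x => d ⬝ᵥ x) '' K) - sInf ((fun x => d ⬝ᵥ x) '' K)

/-- The ellipsoid `E(A,a) = {x : (x-a)ᵀ A⁻¹ (x-a) ≤ 1}`. -/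
noncomputable def ell {n : ℕ} (A : Matrix (Fin n) (Fin n) ℝ) (a : Fin n → ℝ) :
    Set (Fin n → ℝ) :=
  {x | (x - a) ⬝ᵥ (A⁻¹ *ᵥ (x - a)) ≤ 1}

/-- The lattice width of a set: the infimum of widths along nonzero integer directions. -/
noncomputable def latwidth {n : ℕ} (K : Set (Fin n → ℝ)) : ℝ :=
  sInf {r | ∃ d : Fin n → ℤ, d ≠ 0 ∧ r = width K fun i => (d i : ℝ)}

/-- The length of a shortest nonzero vector of the lattice generated by the columns of `B`. -/
noncomputable def shortestVec {n : ℕ} (B : Matrix (Fin n) (Fin n) ℝ) : ℝ :=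
  sInf {r | ∃ z : Fin n → ℤ, z ≠ 0 ∧
    r = Real.sqrt ((B *ᵥ fun i => (z i : ℝ)) ⬝ᵥ (B *ᵥ fun i => (z i : ℝ)))}

/-- The covering radius of the lattice generated by the columns of `B`. -/
noncomputable def covRad {n : ℕ} (B : Matrix (Fin n) (Fin n) ℝ) : ℝ :=
  sInf {r | 0 < r ∧ ∀ x : Fin n → ℝ, ∃ z : Fin n → ℤ,
    Real.sqrt ((x - B *ᵥ fun i => (z i : ℝ)) ⬝ᵥ (x - B *ᵥ fun i => (z i : ℝ))) ≤ r}

private lemma dp_self_nonneg {n : ℕ} (u : Fin n → ℝ) : 0 ≤ u ⬝ᵥ u :=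
  Finset.sum_nonneg fun i _ => mul_self_nonneg (u i)

private lemma dp_cs {n : ℕ} (u v : Fin n → ℝ) :
    u ⬝ᵥ v ≤ Real.sqrt (u ⬝ᵥ u) * Real.sqrt (v ⬝ᵥ v) := by
  have h := Finset.sum_mul_sq_le_sq_mul_sq Finset.univ u v
  have h1 : (u ⬝ᵥ v) ^ 2 ≤ (u ⬝ᵥ u) * (v ⬝ᵥ v) := by
    simpa [dotProduct, sq] using h
  calc u ⬝ᵥ v ≤ |u ⬝ᵥ v| := le_abs_self _
    _ = Real.sqrt ((u ⬝ᵥ v) ^ 2) := (Real.sqrt_sq_eq_abs _).symm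
    _ ≤ Real.sqrt ((u ⬝ᵥ u) * (v ⬝ᵥ v)) := Real.sqrt_le_sqrt h1
    _ = _ := Real.sqrt_mul (dp_self_nonneg u) _

private lemma mulVec_sq_bound {n : ℕ} (M : Matrix (Fin n) (Fin n) ℝ) (w : Fin n → ℝ) :
    (M *ᵥ w) ⬝ᵥ (M *ᵥ w) ≤ (∑ i, ∑ j, (M i j) ^ 2) * (w ⬝ᵥ w) := by
  have hw : w ⬝ᵥ w = ∑ j, (w j) ^ 2 := by simp [dotProduct, sq]
  have hl : (M *ᵥ w) ⬝ᵥ (M *ᵥ w) = ∑ i, (∑ j, M i j * w j) ^ 2 := by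
    simp [dotProduct, mulVec, sq]
  rw [hl, hw, Finset.sum_mul]
  exact Finset.sum_le_sum fun i _ => Finset.sum_mul_sq_le_sq_mul_sq Finset.univ (M i) w

theorem stmt8 {n : ℕ}
    (hban : ∀ B : Matrix (Fin n) (Fin n) ℝ, B.det ≠ 0 →
      shortestVec B * covRad (B⁻¹)ᵀ ≤ (n : ℝ) / 2)
    (A : Matrix (Fin n) (Fin n) ℝ) (hA : A.PosDef) (a : Fin n → ℝ)
    (hempty : ∀ z : Fin n → ℤ, (fun i => (z i : ℝ)) ∉ ell A a) :
    latwidth (ell A a) ≤ n := by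
  rcases Nat.eq_zero_or_pos n with hn | hn
  · subst hn
    exact absurd (by simp [ell, dotProduct] :
      (fun i => (((0 : Fin 0 → ℤ)) i : ℝ)) ∈ ell A a) (hempty 0)
  set K := ell A a with hK
  have hAps := hA.posSemidef
  set S := (open scoped MatrixOrder in CFC.sqrt A) with hSdef
  have hSS : S * S = A := (open scoped MatrixOrder in CFC.sqrt_mul_sqrt_self A hAps.nonneg)
  have hSsym : Sᵀ = S := (open scoped MatrixOrder in (CFC.sqrt_nonneg A).posSemidef.1)
  have hdetA := hA.det_pos
  have hAd : A.det = S.det * S.det := by rw [← hSS, det_mul]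
  have hdetS : S.det ≠ 0 := by
    intro h; rw [h, mul_zero] at hAd; linarith [hAd ▸ hdetA]
  have hSunit : IsUnit S.det := isUnit_iff_ne_zero.mpr hdetS
  have hSinv_mul : S⁻¹ * S = 1 := nonsing_inv_mul S hSunit
  have hmul_Sinv : S * S⁻¹ = 1 := mul_nonsing_inv S hSunit
  have hAinv : A⁻¹ = S⁻¹ * S⁻¹ := by rw [← hSS, Matrix.mul_inv_rev]
  have hSinvT : S⁻¹ᵀ = S⁻¹ := by rw [transpose_nonsing_inv, hSsym]
  -- quadratic form identity
  have hquad : ∀ w : Fin n → ℝ, w ⬝ᵥ (A⁻¹ *ᵥ w) = (S⁻¹ *ᵥ w) ⬝ᵥ (S⁻¹ *ᵥ w) := by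
    intro w
    rw [hAinv, ← mulVec_mulVec, dotProduct_mulVec, ← mulVec_transpose, hSinvT]
  have haK : a ∈ K := by simp [hK, ell]
  -- Cauchy-Schwarz bound on linear functionals over the ellipsoid
  have hkey : ∀ d : Fin n → ℝ, ∀ x ∈ K, d ⬝ᵥ x - d ⬝ᵥ a ≤
      Real.sqrt ((S *ᵥ d) ⬝ᵥ (S *ᵥ d)) := by
    intro d x hx
    have hx' : (x - a) ⬝ᵥ (A⁻¹ *ᵥ (x - a)) ≤ 1 := hx
    rw [hquad (x - a)] at hx'
    set u := S⁻¹ *ᵥ (x - a) with hu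
    have hxa : S *ᵥ u = x - a := by
      rw [hu, mulVec_mulVec, hmul_Sinv, one_mulVec]
    have hdu : d ⬝ᵥ (x - a) = (S *ᵥ d) ⬝ᵥ u := by
      rw [← hxa, dotProduct_mulVec, ← mulVec_transpose, hSsym]
    have hcs := dp_cs (S *ᵥ d) u
    have hsqrtu : Real.sqrt (u ⬝ᵥ u) ≤ 1 := Real.sqrt_le_one.mpr hx'
    have hdxa : d ⬝ᵥ (x - a) = d ⬝ᵥ x - d ⬝ᵥ a := by
      rw [dotProduct_sub]
    nlinarith [Real.sqrt_nonneg ((S *ᵥ d) ⬝ᵥ (S *ᵥ d))]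
  -- width bounds
  have hwidth : ∀ d : Fin n → ℝ,
      0 ≤ width K d ∧ width K d ≤ 2 * Real.sqrt ((S *ᵥ d) ⬝ᵥ (S *ᵥ d)) := by
    intro d
    set M := Real.sqrt ((S *ᵥ d) ⬝ᵥ (S *ᵥ d)) with hM
    have hub : ∀ y ∈ (fun x => d ⬝ᵥ x) '' K, y ≤ d ⬝ᵥ a + M := by
      rintro y ⟨x, hx, rfl⟩
      have := hkey d x hx; dsimp only; linarith
    have hlb : ∀ y ∈ (fun x => d ⬝ᵥ x) '' K, d ⬝ᵥ a - M ≤ y := by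
      rintro y ⟨x, hx, rfl⟩
      have h1 := hkey (-d) x hx
      have h2 : (S *ᵥ (-d)) ⬝ᵥ (S *ᵥ (-d)) = (S *ᵥ d) ⬝ᵥ (S *ᵥ d) := by
        simp [mulVec_neg]
      rw [h2] at h1
      simp only [neg_dotProduct] at h1
      dsimp only; linarith
    have hne : ((fun x => d ⬝ᵥ x) '' K).Nonempty := ⟨d ⬝ᵥ a, a, haK, rfl⟩
    have hsup_le : sSup ((fun x => d ⬝ᵥ x) '' K) ≤ d ⬝ᵥ a + M := csSup_le hne hub
    have hinf_ge : d ⬝ᵥ a - M ≤ sInf ((fun x => d ⬝ᵥ x) '' K) := le_csInf hne hlb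
    have hsup_ge : d ⬝ᵥ a ≤ sSup ((fun x => d ⬝ᵥ x) '' K) :=
      le_csSup ⟨d ⬝ᵥ a + M, hub⟩ ⟨a, haK, rfl⟩
    have hinf_le : sInf ((fun x => d ⬝ᵥ x) '' K) ≤ d ⬝ᵥ a :=
      csInf_le ⟨d ⬝ᵥ a - M, hlb⟩ ⟨a, haK, rfl⟩
    constructor <;> unfold width <;> linarith
  have hLbdd : BddBelow {r | ∃ d : Fin n → ℤ, d ≠ 0 ∧ r = width K fun i => (d i : ℝ)} :=
    ⟨0, by rintro r ⟨d, hd, rfl⟩; exact (hwidth _).1⟩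
  -- the covering radius set of S⁻¹
  set C := {r | 0 < r ∧ ∀ x : Fin n → ℝ, ∃ z : Fin n → ℤ,
    Real.sqrt ((x - S⁻¹ *ᵥ fun i => (z i : ℝ)) ⬝ᵥ (x - S⁻¹ *ᵥ fun i => (z i : ℝ))) ≤ r}
    with hCdef
  have hcovC : covRad S⁻¹ = sInf C := rfl
  set F := ∑ i, ∑ j, (S⁻¹ i j) ^ 2 with hF
  have hF0 : 0 ≤ F := by positivity
  have hCne : C.Nonempty := by
    refine ⟨Real.sqrt (F * n) + 1, by positivity, ?_⟩
    intro x
    refine ⟨fun j => round ((S *ᵥ x) j), ?_⟩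
    set v := S *ᵥ x with hv
    set z' : Fin n → ℝ := fun i => ((round (v i) : ℤ) : ℝ) with hz'
    have hxv : S⁻¹ *ᵥ v = x := by rw [hv, mulVec_mulVec, hSinv_mul, one_mulVec]
    have hdiff : x - S⁻¹ *ᵥ z' = S⁻¹ *ᵥ (v - z') := by rw [mulVec_sub, hxv]
    have hvz : (v - z') ⬝ᵥ (v - z') ≤ (n : ℝ) := by
      have hterm : ∀ j, (v j - z' j) * (v j - z' j) ≤ 1 := by
        intro j
        have h := abs_sub_round (v j)
        have h' : |v j - z' j| ≤ 1 / 2 := h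
        nlinarith [abs_nonneg (v j - z' j), abs_mul_abs_self (v j - z' j)]
      calc (v - z') ⬝ᵥ (v - z') = ∑ j, (v j - z' j) * (v j - z' j) := by
            simp [dotProduct]
        _ ≤ ∑ _j : Fin n, (1 : ℝ) := Finset.sum_le_sum fun j _ => hterm j
        _ = n := by simp
    have hbd : (x - S⁻¹ *ᵥ z') ⬝ᵥ (x - S⁻¹ *ᵥ z') ≤ F * n := by
      rw [hdiff]
      calc (S⁻¹ *ᵥ (v - z')) ⬝ᵥ (S⁻¹ *ᵥ (v - z')) ≤ F * ((v - z') ⬝ᵥ (v - z')) :=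
            mulVec_sq_bound S⁻¹ (v - z')
        _ ≤ F * n := mul_le_mul_of_nonneg_left hvz hF0
    calc Real.sqrt ((x - S⁻¹ *ᵥ z') ⬝ᵥ (x - S⁻¹ *ᵥ z')) ≤ Real.sqrt (F * n) :=
          Real.sqrt_le_sqrt hbd
      _ ≤ Real.sqrt (F * n) + 1 := by linarith
  have hC1 : ∀ r ∈ C, (1 : ℝ) ≤ r := by
    rintro r ⟨hr0, hr⟩
    obtain ⟨z, hz⟩ := hr (S⁻¹ *ᵥ a)
    set z' : Fin n → ℝ := fun i => (z i : ℝ) with hz'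
    have hmem := hempty z
    have hq : 1 < (z' - a) ⬝ᵥ (A⁻¹ *ᵥ (z' - a)) := by
      by_contra hle
      exact hmem (le_of_not_gt hle)
    have heq : (S⁻¹ *ᵥ a - S⁻¹ *ᵥ z') ⬝ᵥ (S⁻¹ *ᵥ a - S⁻¹ *ᵥ z')
        = (z' - a) ⬝ᵥ (A⁻¹ *ᵥ (z' - a)) := by
      have hsym : a - z' = -(z' - a) := (neg_sub z' a).symm
      rw [← mulVec_sub, ← hquad (a - z'), hsym, mulVec_neg, neg_dotProduct,
        dotProduct_neg, neg_neg]
    rw [heq] at hz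
    have h1 : (1 : ℝ) < Real.sqrt ((z' - a) ⬝ᵥ (A⁻¹ *ᵥ (z' - a))) := by
      rw [show (1 : ℝ) = Real.sqrt 1 from Real.sqrt_one.symm]
      exact Real.sqrt_lt_sqrt one_pos.le hq
    linarith
  have hcov1 : (1 : ℝ) ≤ covRad S⁻¹ := by
    rw [hcovC]; exact le_csInf hCne hC1
  have hs0 : 0 ≤ shortestVec S :=
    Real.sInf_nonneg (by rintro r ⟨z, hz, rfl⟩; exact Real.sqrt_nonneg _)
  have hb := hban S hdetS
  rw [hSinvT] at hb
  have hsle : shortestVec S ≤ (n : ℝ) / 2 := by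
    have h := mul_le_mul_of_nonneg_left hcov1 hs0
    rw [mul_one] at h
    linarith
  -- conclusion
  by_contra hcon
  push_neg at hcon
  have hε : 0 < (latwidth K - n) / 2 := by linarith
  have hTne : {r | ∃ z : Fin n → ℤ, z ≠ 0 ∧
      r = Real.sqrt ((S *ᵥ fun i => (z i : ℝ)) ⬝ᵥ (S *ᵥ fun i => (z i : ℝ)))}.Nonempty := by
    refine ⟨_, fun _ => (1 : ℤ), ?_, rfl⟩
    intro h
    have := congrFun h ⟨0, hn⟩
    simp at this
  obtain ⟨r, ⟨z, hz, rfl⟩, hrlt⟩ := Real.lt_sInf_add_pos hTne hε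
  have hw2 := (hwidth (fun i => (z i : ℝ))).2
  have hlat_le : latwidth K ≤ width K (fun i => (z i : ℝ)) :=
    csInf_le hLbdd ⟨z, hz, rfl⟩
  have hsv : shortestVec S = sInf {r | ∃ z : Fin n → ℤ, z ≠ 0 ∧
      r = Real.sqrt ((S *ᵥ fun i => (z i : ℝ)) ⬝ᵥ (S *ᵥ fun i => (z i : ℝ)))} := rfl
  rw [← hsv] at hrlt
  linarith
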